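/- Fix m ≥ 2 an integer and α > 0. Then the function F(y) = ∫_y^1 exp((t^{1−m} − y^{1−m})/(α(m−1))) dt satisfies F(y) = o(y) as y → 0+. -/

import Mathlib

open Real Filter

/-- Key pointwise inequality: for `0 < y ≤ t`,
`t^(1-m) - y^(1-m) ≤ -((m-1)*(t-y)/t^m)`. -/
lemma shio_key (m : ℕ) (hm : 2 ≤ m) {y t : ℝ} (hy : 0 < y) (hyt : y ≤ t) :
    t ^ (1 - (m : ℝ)) - y ^ (1 - (m : ℝ)) ≤ -(((m : ℝ) - 1) * (t - y) / t ^ m) := by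
  have ht : 0 < t := lt_of_lt_of_le hy hyt
  have htm : (0:ℝ) < t ^ m := pow_pos ht m
  have hym : (0:ℝ) < y ^ m := pow_pos hy m
  have hrw : ∀ x : ℝ, 0 < x → x ^ (1 - (m : ℝ)) = x / x ^ m := by
    intro x hx
    rw [Real.rpow_sub hx, Real.rpow_one, Real.rpow_natCast]
  rw [hrw t ht, hrw y hy]
  -- Bernoulli : (t/y)^m ≥ 1 + m*(t/y - 1)
  have hx1 : (1:ℝ) ≤ t / y := (one_le_div hy).2 hyt
  have hb : 1 + (m:ℝ) * (t / y - 1) ≤ (t / y) ^ m := by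
    have := one_add_mul_le_pow (show (-2:ℝ) ≤ t / y - 1 by linarith) m
    simpa using this
  have hpoly : y ^ m * (t + ((m:ℝ) - 1) * (t - y)) ≤ y * t ^ m := by
    have hdp : (t / y) ^ m = t ^ m / y ^ m := div_pow t y m
    rw [hdp] at hb
    have h2 : y * (1 + (m:ℝ) * (t / y - 1)) ≤ y * (t ^ m / y ^ m) :=
      mul_le_mul_of_nonneg_left hb hy.le
    have h3 : y * (1 + (m:ℝ) * (t / y - 1)) = y + (m:ℝ) * (t - y) := by
      field_simp
    have h4 : y * (t ^ m / y ^ m) = y * t ^ m / y ^ m := by ring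
    rw [h3, h4] at h2
    have h5 : (y + (m:ℝ) * (t - y)) * y ^ m ≤ y * t ^ m := (le_div_iff₀ hym).1 h2
    nlinarith [h5]
  rw [div_sub_div _ _ htm.ne' hym.ne', ← neg_div,
    div_le_div_iff₀ (mul_pos htm hym) htm]
  nlinarith [mul_le_mul_of_nonneg_right hpoly (le_of_lt htm)]

theorem semi_hyperbolic_integral_little_o (m : ℕ) (hm : 2 ≤ m) (α : ℝ) (hα : 0 < α) :
    Tendsto
      (fun y : ℝ =>
        (∫ t in y..1, Real.exp ((t ^ (1 - (m : ℝ)) - y ^ (1 - (m : ℝ))) / (α * ((m : ℝ) - 1)))) / y)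
      (nhdsWithin 0 (Set.Ioi 0)) (nhds 0) := by
  have hm1 : (1:ℝ) ≤ (m:ℝ) - 1 := by
    have : (2:ℝ) ≤ (m:ℝ) := by exact_mod_cast hm
    linarith
  have hβ : 0 < α * ((m:ℝ) - 1) := mul_pos hα (by linarith)
  set r : ℝ := 1 - (m:ℝ) with hr
  have hrneg : r ≤ -1 := by simp [hr]; linarith
  clear_value r
  -- constant c for the tail
  set c : ℝ := (1 - (2:ℝ) ^ r) / (α * ((m:ℝ) - 1)) with hc
  have h2r : (2:ℝ) ^ r < 1 :=
    Real.rpow_lt_one_of_one_lt_of_neg one_lt_two (by linarith)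
  have hcpos : 0 < c := div_pos (by linarith) hβ
  clear_value c
  -- upper bound function
  set h : ℝ → ℝ := fun y => α * 2 ^ m * y ^ (m - 1) + Real.exp (-c / y) / y with hh
  clear_value h
  have hh0 : Tendsto h (nhdsWithin 0 (Set.Ioi 0)) (nhds 0) := by
    rw [hh]
    have T1 : Tendsto (fun y : ℝ => α * 2 ^ m * y ^ (m - 1)) (nhdsWithin 0 (Set.Ioi 0)) (nhds 0) := by
      have : Tendsto (fun y : ℝ => α * 2 ^ m * y ^ (m - 1)) (nhds 0) (nhds (α * 2 ^ m * 0 ^ (m - 1))) :=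
        (Continuous.mul continuous_const (continuous_pow _)).tendsto 0
      have hz : α * 2 ^ m * (0:ℝ) ^ (m - 1) = 0 := by
        rw [zero_pow (by omega), mul_zero]
      rw [hz] at this
      exact this.mono_left nhdsWithin_le_nhds
    have T2 : Tendsto (fun y : ℝ => Real.exp (-c / y) / y) (nhdsWithin 0 (Set.Ioi 0)) (nhds 0) := by
      have g1 : Tendsto (fun x : ℝ => x * Real.exp (-x)) atTop (nhds 0) := by
        simpa using Real.tendsto_pow_mul_exp_neg_atTop_nhds_zero 1
      have g2 : Tendsto (fun x : ℝ => c * x) atTop atTop :=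
        Tendsto.const_mul_atTop hcpos tendsto_id
      have g3 : Tendsto (fun x : ℝ => (c * x) * Real.exp (-(c * x))) atTop (nhds 0) :=
        g1.comp g2
      have g4 : Tendsto (fun x : ℝ => x * Real.exp (-(c * x))) atTop (nhds 0) := by
        have := g3.const_mul c⁻¹
        rw [mul_zero] at this
        refine this.congr fun x => ?_
        field_simp
      have g5 : Tendsto (fun y : ℝ => y⁻¹) (nhdsWithin 0 (Set.Ioi 0)) atTop :=
        tendsto_inv_nhdsGT_zero
      have := g4.comp g5
      refine this.congr fun y => ?_
      simp only [Function.comp_apply]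
      rw [div_eq_mul_inv, div_eq_mul_inv, mul_comm]
      congr 2
      ring
    have := T1.add T2
    rw [add_zero] at this
    exact this
  -- squeeze
  refine tendsto_of_tendsto_of_tendsto_of_le_of_le' tendsto_const_nhds hh0 ?_ ?_
  · -- 0 ≤ F(y)/y eventually
    filter_upwards [self_mem_nhdsWithin, Ioo_mem_nhdsGT_of_mem (by norm_num : (0:ℝ) ∈ Set.Ico 0 (1/2))] with y hy hy2
    have hy0 : 0 < y := hy
    have hy1 : y ≤ 1 := by linarith [hy2.2]
    apply div_nonneg _ hy0.le
    apply intervalIntegral.integral_nonneg hy1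
    intro t _
    exact (Real.exp_pos _).le
  · -- F(y)/y ≤ h y eventually
    filter_upwards [Ioo_mem_nhdsGT_of_mem (by norm_num : (0:ℝ) ∈ Set.Ico 0 (1/2))] with y hy
    obtain ⟨hy0, hy12⟩ := hy
    have h2y1 : 2 * y < 1 := by linarith
    have hy2y : y < 2 * y := by linarith
    set E : ℝ → ℝ := fun t => Real.exp ((t ^ r - y ^ r) / (α * ((m:ℝ) - 1))) with hE
    -- continuity of E on Ioi 0
    have hEc : ContinuousOn E (Set.Ioi 0) := by
      intro t ht
      apply ContinuousAt.continuousWithinAt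
      have h1 : ContinuousAt (fun t : ℝ => t ^ r) t :=
        Real.continuousAt_rpow_const t r (Or.inl (ne_of_gt ht))
      exact (Real.continuous_exp.continuousAt).comp
        (((h1.sub continuousAt_const).div_const _))
    have hsub1 : Set.uIcc y (2*y) ⊆ Set.Ioi (0:ℝ) := by
      rw [Set.uIcc_of_le hy2y.le]
      intro t ht
      exact lt_of_lt_of_le hy0 ht.1
    have hsub2 : Set.uIcc (2*y) 1 ⊆ Set.Ioi (0:ℝ) := by
      rw [Set.uIcc_of_le h2y1.le]
      intro t ht
      exact lt_of_lt_of_le (by linarith) ht.1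
    have hI1 : IntervalIntegrable E MeasureTheory.volume y (2*y) :=
      (hEc.mono hsub1).intervalIntegrable
    have hI2 : IntervalIntegrable E MeasureTheory.volume (2*y) 1 :=
      (hEc.mono hsub2).intervalIntegrable
    have hsplit : (∫ t in y..1, E t) = (∫ t in y..(2*y), E t) + ∫ t in (2*y)..1, E t :=
      (intervalIntegral.integral_add_adjacent_intervals hI1 hI2).symm
    set c₁ : ℝ := α * 2 ^ m * y ^ m with hc₁
    have hc₁pos : 0 < c₁ := by positivity
    clear_value c₁
    -- middle bound
    have hmid : (∫ t in y..(2*y), E t) ≤ c₁ := by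
      have hptw : ∀ t ∈ Set.Icc y (2*y), E t ≤ Real.exp (-((t - y) / c₁)) := by
        intro t ht
        apply Real.exp_le_exp.2
        have hkey := shio_key m hm hy0 ht.1
        rw [← hr] at hkey
        have htpos : 0 < t := lt_of_lt_of_le hy0 ht.1
        have htm : (0:ℝ) < t ^ m := pow_pos htpos m
        have h1 : (t ^ r - y ^ r) / (α * ((m:ℝ) - 1))
            ≤ -(((m:ℝ) - 1) * (t - y) / t ^ m) / (α * ((m:ℝ) - 1)) :=
          div_le_div_of_nonneg_right hkey hβ.le
        refine h1.trans ?_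
        have h2 : -(((m:ℝ) - 1) * (t - y) / t ^ m) / (α * ((m:ℝ) - 1))
            = -((t - y) / (α * t ^ m)) := by
          field_simp
        rw [h2, neg_le_neg_iff]
        have hle : α * t ^ m ≤ c₁ := by
          have h9 : t ^ m ≤ (2*y) ^ m := pow_le_pow_left₀ htpos.le ht.2 m
          calc α * t ^ m ≤ α * (2*y) ^ m := by nlinarith
            _ = c₁ := by rw [hc₁]; ring
        exact div_le_div_of_nonneg_left (by linarith [ht.1]) (by positivity) hle
      have hIg : IntervalIntegrable (fun t => Real.exp (-((t - y) / c₁))) MeasureTheory.volume y (2*y) := by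
        apply Continuous.intervalIntegrable
        continuity
      have h3 : (∫ t in y..(2*y), E t) ≤ ∫ t in y..(2*y), Real.exp (-((t - y) / c₁)) :=
        intervalIntegral.integral_mono_on hy2y.le hI1 hIg hptw
      refine h3.trans ?_
      -- compute the exponential integral via antiderivative
      have hderiv : ∀ t ∈ Set.uIcc y (2*y),
          HasDerivAt (fun t => -c₁ * Real.exp (-((t - y) / c₁))) (Real.exp (-((t - y) / c₁))) t := by
        intro t _
        have h1 : HasDerivAt (fun t : ℝ => -((t - y) / c₁)) (-(1/c₁)) t := by
          have := ((hasDerivAt_id t).sub_const y).div_const c₁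
          exact this.neg
        have h2 := (h1.exp).const_mul (-c₁)
        convert h2 using 1
        · rfl
        · rfl
        have hc0 : c₁ ≠ 0 := hc₁pos.ne'
        field_simp
      have hIc : IntervalIntegrable (fun t => Real.exp (-((t - y) / c₁))) MeasureTheory.volume y (2*y) := hIg
      rw [intervalIntegral.integral_eq_sub_of_hasDerivAt hderiv hIc]
      have hexp1 : Real.exp (-((2*y - y) / c₁)) ≥ 0 := (Real.exp_pos _).le
      have : -((y - y)/c₁) = 0 := by ring_nf
      simp only [this]
      have : -c₁ * Real.exp (-((2*y - y) / c₁)) - -c₁ * Real.exp 0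
          = c₁ * (1 - Real.exp (-((2*y - y) / c₁))) := by
        rw [Real.exp_zero]; ring
      rw [this]
      nlinarith [Real.exp_pos (-((2*y - y) / c₁))]
    -- tail bound
    have htail : (∫ t in (2*y)..1, E t) ≤ Real.exp (-c / y) := by
      set K : ℝ := Real.exp (((2*y) ^ r - y ^ r) / (α * ((m:ℝ) - 1))) with hK
      have hptw : ∀ t ∈ Set.Icc (2*y) 1, E t ≤ K := by
        intro t ht
        apply Real.exp_le_exp.2
        apply div_le_div_of_nonneg_right _ hβ.le
        have : t ^ r ≤ (2*y) ^ r :=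
          Real.rpow_le_rpow_of_nonpos (by linarith) ht.1 (by linarith)
        linarith
      have h3 : (∫ t in (2*y)..1, E t) ≤ ∫ t in (2*y)..1, K :=
        intervalIntegral.integral_mono_on h2y1.le hI2
          (intervalIntegrable_const) hptw
      rw [intervalIntegral.integral_const, smul_eq_mul] at h3
      have hKpos : 0 < K := Real.exp_pos _
      clear_value K
      have h4 : (1 - 2*y) * K ≤ K := by
        have h4a : 0 ≤ 2*y*K := mul_nonneg (by linarith) hKpos.le
        have h4b : (1 - 2*y) * K = K - 2*y*K := by ring
        linarith
      refine h3.trans (h4.trans ?_)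
      -- K ≤ exp(-c/y)
      rw [hK, Real.exp_le_exp]
      have hmul : (2*y) ^ r = 2 ^ r * y ^ r := Real.mul_rpow (by norm_num) hy0.le
      rw [hmul]
      have h5 : (2 ^ r * y ^ r - y ^ r) / (α * ((m:ℝ) - 1)) = -(c * y ^ r) := by
        rw [hc]
        field_simp
        ring
      rw [h5]
      have h6 : y ^ (-1 : ℝ) ≤ y ^ r :=
        Real.rpow_le_rpow_of_exponent_ge hy0 (by linarith) hrneg
      have h7 : y⁻¹ ≤ y ^ r := by
        rwa [Real.rpow_neg_one] at h6
      have h8 : c * y⁻¹ ≤ c * y ^ r := mul_le_mul_of_nonneg_left h7 hcpos.le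
      rw [neg_div, div_eq_mul_inv]
      linarith
    -- combine
    have hF : (∫ t in y..1, E t) ≤ c₁ + Real.exp (-c / y) := by
      rw [hsplit]; exact add_le_add hmid htail
    have : (∫ t in y..1, E t) / y ≤ (c₁ + Real.exp (-c / y)) / y :=
      div_le_div_of_nonneg_right hF hy0.le
    refine this.trans_eq ?_
    simp only [hh, hc₁]
    rw [add_div]
    congr 1
    have hym' : y ^ m / y = y ^ (m-1) := by
      rw [eq_comm, eq_div_iff (ne_of_gt hy0), ← pow_succ]
      congr 1
      omega
    rw [mul_div_assoc, hym']
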